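/- Let n and k be natural numbers with n ≥ k ≥ 2. Identify graphs on the vertex set {1,…,n} with subsets of the set of unordered pairs of distinct elements of {1,…,n}. Then the number of such graphs that contain a clique of size k or an independent set of size k is at most (n choose k) · 2^(1 - k(k-1)/2) · 2^(n(n-1)/2). -/

import Mathlib

open Finset

/-- The set of unordered pairs of distinct elements of the vertex set `Fin n`,
modelled as 2-element subsets. -/
def pairsOf (n : ℕ) : Finset (Finset (Fin n)) :=
  Finset.univ.powersetCard 2

/-- `S` is a clique in the graph with edge set `E`: every pair from `S` is an edge. -/
def IsCliqueIn (n : ℕ) (E : Finset (Finset (Fin n))) (S : Finset (Fin n)) : Prop :=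
  ∀ p ∈ pairsOf n, p ⊆ S → p ∈ E

/-- `S` is an independent set in the graph with edge set `E`: no pair from `S` is an edge. -/
def IsIndepIn (n : ℕ) (E : Finset (Finset (Fin n))) (S : Finset (Fin n)) : Prop :=
  ∀ p ∈ pairsOf n, p ⊆ S → p ∉ E

open Classical in
/-- The number of graphs on `n` vertices (subsets of the set of unordered pairs of
distinct vertices) containing a clique of size `k` or an independent set of size `k`
is at most `(n choose k) · 2^(1 - k(k-1)/2) · 2^(n(n-1)/2)`. -/
theorem count_non_ramsey_graphs_le (n k : ℕ) (hk : 2 ≤ k) (hn : k ≤ n) :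
    ((((pairsOf n).powerset).filter
        (fun E => ∃ S : Finset (Fin n), S.card = k ∧
          (IsCliqueIn n E S ∨ IsIndepIn n E S))).card : ℝ) ≤
      (n.choose k : ℝ) * (2 : ℝ) ^ ((1 : ℤ) - (k * (k - 1) / 2 : ℕ)) *
        (2 : ℝ) ^ (n * (n - 1) / 2) := by
  classical
  set N := n * (n - 1) / 2 with hN
  set K := k * (k - 1) / 2 with hK
  have hNchoose : N = n.choose 2 := by rw [Nat.choose_two_right]
  have hKchoose : K = k.choose 2 := by rw [Nat.choose_two_right]
  have hKN : K ≤ N := by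
    rw [hNchoose, hKchoose]; exact Nat.choose_le_choose 2 hn
  have hpairs : (pairsOf n).card = N := by
    simp [pairsOf, Finset.card_powersetCard, hNchoose]
  -- the key per-S bound
  have key : ∀ S : Finset (Fin n), S.card = k →
      (((pairsOf n).powerset).filter
        (fun E => IsCliqueIn n E S ∨ IsIndepIn n E S)).card ≤ 2 * 2 ^ (N - K) := by
    intro S hS
    set P := (pairsOf n).filter (fun p => p ⊆ S) with hP
    have hPsub : P ⊆ pairsOf n := filter_subset _ _
    have hPcard : P.card = K := by
      have : P = S.powersetCard 2 := by
        ext p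
        simp only [hP, mem_filter, pairsOf, mem_powersetCard, subset_univ, true_and,
          and_comm]
      rw [this, Finset.card_powersetCard, hS, hKchoose]
    have hN' : (pairsOf n \ P).card = N - K := by
      rw [card_sdiff_of_subset hPsub, hpairs, hPcard]
    rw [filter_or]
    refine le_trans (card_union_le _ _) ?_
    have hclique : (((pairsOf n).powerset).filter (fun E => IsCliqueIn n E S)).card
        ≤ 2 ^ (N - K) := by
      rw [← hN', ← Finset.card_powerset]
      apply Finset.card_le_card_of_injOn (fun E => E \ P)
      · intro E hE
        simp only [mem_coe, mem_filter, mem_powerset] at hE ⊢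
        exact sdiff_subset_sdiff hE.1 (le_refl P)
      · intro E1 h1 E2 h2 heq
        simp only [Finset.coe_filter, Set.mem_setOf_eq, mem_powerset] at h1 h2
        have hP1 : P ⊆ E1 := by
          intro p hp
          simp only [hP, mem_filter] at hp
          exact h1.2 p hp.1 hp.2
        have hP2 : P ⊆ E2 := by
          intro p hp
          simp only [hP, mem_filter] at hp
          exact h2.2 p hp.1 hp.2
        simp only at heq
        calc E1 = E1 \ P ∪ P := (sdiff_union_of_subset hP1).symm
          _ = E2 \ P ∪ P := by rw [heq]
          _ = E2 := sdiff_union_of_subset hP2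
    have hindep : (((pairsOf n).powerset).filter (fun E => IsIndepIn n E S)).card
        ≤ 2 ^ (N - K) := by
      rw [← hN', ← Finset.card_powerset]
      apply Finset.card_le_card
      intro E hE
      simp only [mem_filter, mem_powerset] at hE ⊢
      intro p hp
      have hp1 := hE.1 hp
      refine mem_sdiff.2 ⟨hp1, ?_⟩
      intro hpP
      simp only [hP, mem_filter] at hpP
      exact hE.2 p hpP.1 hpP.2 hp
    omega
  -- union bound
  have hsub : (((pairsOf n).powerset).filter
        (fun E => ∃ S : Finset (Fin n), S.card = k ∧
          (IsCliqueIn n E S ∨ IsIndepIn n E S))) ⊆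
      (Finset.univ.powersetCard k).biUnion (fun S =>
        ((pairsOf n).powerset).filter (fun E => IsCliqueIn n E S ∨ IsIndepIn n E S)) := by
    intro E hE
    simp only [mem_filter, mem_powerset] at hE
    obtain ⟨hE1, S, hScard, hSgood⟩ := hE
    refine mem_biUnion.2 ⟨S, ?_, ?_⟩
    · simp [mem_powersetCard, hScard]
    · simp only [mem_filter, mem_powerset]; exact ⟨hE1, hSgood⟩
  have hbound : (((pairsOf n).powerset).filter
        (fun E => ∃ S : Finset (Fin n), S.card = k ∧
          (IsCliqueIn n E S ∨ IsIndepIn n E S))).card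
      ≤ n.choose k * (2 * 2 ^ (N - K)) := by
    refine le_trans (Finset.card_le_card hsub) ?_
    refine le_trans (Finset.card_biUnion_le) ?_
    have : ∀ S ∈ Finset.univ.powersetCard k,
        (((pairsOf n).powerset).filter
          (fun E => IsCliqueIn n E S ∨ IsIndepIn n E S)).card ≤ 2 * 2 ^ (N - K) := by
      intro S hSmem
      rw [mem_powersetCard] at hSmem
      exact key S hSmem.2
    refine le_trans (Finset.sum_le_sum this) ?_
    rw [Finset.sum_const, Finset.card_powersetCard, Finset.card_univ, Fintype.card_fin,
      smul_eq_mul]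
  -- transfer to reals
  have hRHS : (n.choose k : ℝ) * (2 : ℝ) ^ ((1 : ℤ) - (K : ℕ)) * (2 : ℝ) ^ N
      = (n.choose k : ℝ) * (2 * 2 ^ (N - K)) := by
    rw [mul_assoc]
    congr 1
    have h2 : (2 : ℝ) ≠ 0 := two_ne_zero
    have : (2 : ℝ) ^ ((1 : ℤ) - (K : ℕ)) * (2 : ℝ) ^ N
        = (2 : ℝ) ^ ((1 : ℤ) - (K : ℕ) + N) := by
      rw [← zpow_natCast (2 : ℝ) N, ← zpow_add₀ h2]
    rw [this]
    have harg : (1 : ℤ) - (K : ℕ) + N = ((1 + (N - K) : ℕ) : ℤ) := by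
      push_cast [Nat.cast_sub hKN]
      ring
    rw [harg, zpow_natCast, pow_add, pow_one]
  rw [hRHS]
  calc ((((pairsOf n).powerset).filter
        (fun E => ∃ S : Finset (Fin n), S.card = k ∧
          (IsCliqueIn n E S ∨ IsIndepIn n E S))).card : ℝ)
      ≤ ((n.choose k * (2 * 2 ^ (N - K)) : ℕ) : ℝ) := by exact_mod_cast hbound
    _ = (n.choose k : ℝ) * (2 * 2 ^ (N - K)) := by push_cast; ring
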